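/- Let f(x,y) = xy on ℝ² and 0 < α < 1/2. The Jacobian of the GDA map at the critical point (0,0) is [[1, -α],[α, 1]], whose eigenvalues 1 ± αi both have modulus √(1+α²) > 1, so (0,0) is GDA-unstable. In contrast, the Jacobian of the OGDA map at the fixed point (0,0,0,0) is the 4×4 matrix [[1, -2α, 0, α],[2α, 1, -α, 0],[1, 0, 0, 0],[0, 1, 0, 0]], and all four of its complex eigenvalues have modulus at most 1, so (0,0,0,0) is OGDA-stable. Hence there exist critical points that are OGDA-stable but not GDA-stable. -/

import Mathlib

open Matrix

private lemma spec_iff_det {n : ℕ} (A : Matrix (Fin n) (Fin n) ℂ) (μ : ℂ) :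
    μ ∈ spectrum ℂ A ↔ (μ • (1 : Matrix (Fin n) (Fin n) ℂ) - A).det = 0 := by
  simp [spectrum.mem_iff, Matrix.isUnit_iff_isUnit_det, isUnit_iff_ne_zero,
    Algebra.algebraMap_eq_smul_one]

private lemma aux_norm (a b : ℝ) (h : a ^ 2 + b ^ 2 ≤ 1) :
    ‖(a : ℂ) + (b : ℝ) * Complex.I‖ ≤ 1 := by
  have h1 : ‖(a : ℂ) + (b : ℝ) * Complex.I‖ ^ 2 = a ^ 2 + b ^ 2 := by
    rw [Complex.sq_norm, Complex.normSq_apply]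
    simp
    ring
  nlinarith [norm_nonneg ((a : ℂ) + (b : ℝ) * Complex.I)]

theorem ogda_stable_not_gda_stable_example (α : ℝ) (hα : 0 < α) (hα' : α < 1 / 2) :
    ((1 + α * Complex.I) ∈ spectrum ℂ ((!![1, -α; α, 1]).map Complex.ofReal) ∧
     (1 - α * Complex.I) ∈ spectrum ℂ ((!![1, -α; α, 1]).map Complex.ofReal) ∧
     ‖1 + α * Complex.I‖ = Real.sqrt (1 + α ^ 2) ∧
     ‖1 - α * Complex.I‖ = Real.sqrt (1 + α ^ 2) ∧
     1 < Real.sqrt (1 + α ^ 2)) ∧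
    (∀ μ ∈ spectrum ℂ
        ((!![1, -2 * α, 0, α; 2 * α, 1, -α, 0; 1, 0, 0, 0; 0, 1, 0, 0]).map
          Complex.ofReal),
      ‖μ‖ ≤ 1) := by
  have det2 : ∀ μ : ℂ,
      (μ • (1 : Matrix (Fin 2) (Fin 2) ℂ) - (!![1, -α; α, 1]).map Complex.ofReal).det
        = (μ - 1) ^ 2 + (α : ℂ) ^ 2 := by
    intro μ
    rw [Matrix.det_fin_two]
    simp [Matrix.one_apply]
    ring
  constructor
  · refine ⟨?_, ?_, ?_, ?_, ?_⟩
    · rw [spec_iff_det, det2]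
      linear_combination (α : ℂ) ^ 2 * Complex.I_sq
    · rw [spec_iff_det, det2]
      linear_combination (α : ℂ) ^ 2 * Complex.I_sq
    · rw [Complex.norm_def, Complex.normSq_apply]
      norm_num
      ring_nf
    · rw [Complex.norm_def, Complex.normSq_apply]
      norm_num
      ring_nf
    · have h : Real.sqrt 1 < Real.sqrt (1 + α ^ 2) :=
        Real.sqrt_lt_sqrt (by norm_num) (by nlinarith)
      simpa using h
  · intro μ hμ
    rw [spec_iff_det] at hμ
    have hM : μ • (1 : Matrix (Fin 4) (Fin 4) ℂ) -
        (!![1, -2 * α, 0, α; 2 * α, 1, -α, 0; 1, 0, 0, 0; 0, 1, 0, 0]).map Complex.ofReal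
        = !![μ-1, 2*α, 0, -α; -2*α, μ-1, α, 0; -1, 0, μ, 0; 0, -1, 0, μ] := by
      ext i j
      fin_cases i <;> fin_cases j <;>
        simp [Matrix.one_apply, Matrix.vecHead, Matrix.vecTail]
    rw [hM] at hμ
    have det4 : (!![μ-1, 2*α, 0, -α; -2*α, μ-1, α, 0; -1, 0, μ, 0; 0, -1, 0, μ]).det
        = (μ ^ 2 - (1 + 2*α*Complex.I)*μ + α*Complex.I) *
          (μ ^ 2 - (1 - 2*α*Complex.I)*μ - α*Complex.I) := by
      simp [Matrix.det_succ_row_zero, Fin.sum_univ_succ, Fin.succAbove, Fin.castSucc,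
        Fin.castAdd, Fin.castLE]
      linear_combination ((α : ℂ) - 2*α*μ) ^ 2 * Complex.I_sq
    rw [det4] at hμ
    set s : ℝ := Real.sqrt (1 - 4 * α ^ 2) with hs
    have hs2 : s ^ 2 = 1 - 4 * α ^ 2 := Real.sq_sqrt (by nlinarith)
    have hs0 : 0 ≤ s := Real.sqrt_nonneg _
    have hs1 : s < 1 := by nlinarith
    have hs2c : (s : ℂ) ^ 2 = 1 - 4 * (α : ℂ) ^ 2 := by exact_mod_cast hs2
    have key : ∀ a b : ℝ, (μ = (a : ℂ) + (b : ℝ) * Complex.I) →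
        a ^ 2 + b ^ 2 ≤ 1 → ‖μ‖ ≤ 1 := by
      intro a b he hle
      rw [he]; exact aux_norm a b hle
    have hbound1 : ((1 + s) / 2) ^ 2 + α ^ 2 ≤ 1 := by nlinarith
    have hbound2 : ((1 - s) / 2) ^ 2 + α ^ 2 ≤ 1 := by nlinarith
    rcases mul_eq_zero.mp hμ with h1 | h2
    · have hfac : (μ - (((1 + s) / 2 : ℝ) + (α : ℝ) * Complex.I)) *
          (μ - (((1 - s) / 2 : ℝ) + (α : ℝ) * Complex.I)) = 0 := by
        push_cast
        linear_combination h1 + (α : ℂ) ^ 2 * Complex.I_sq + (-(1 : ℂ)/4) * hs2c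
      rcases mul_eq_zero.mp hfac with h | h
      · exact key _ _ (sub_eq_zero.mp h) hbound1
      · exact key _ _ (sub_eq_zero.mp h) hbound2
    · have hfac : (μ - (((1 + s) / 2 : ℝ) + (-α : ℝ) * Complex.I)) *
          (μ - (((1 - s) / 2 : ℝ) + (-α : ℝ) * Complex.I)) = 0 := by
        push_cast
        linear_combination h2 + (α : ℂ) ^ 2 * Complex.I_sq + (-(1 : ℂ)/4) * hs2c
      rcases mul_eq_zero.mp hfac with h | h
      · exact key _ _ (sub_eq_zero.mp h) (by nlinarith)
      · exact key _ _ (sub_eq_zero.mp h) (by nlinarith)
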